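/- A nontrivial finite group G satisfies ω(G) = 2 if and only if G is an elementary abelian p-group for some prime p. -/

import Mathlib

open scoped MatrixGroups

/-- The number of orbits of the natural action of the automorphism group `Aut G`
on the group `G`. -/
noncomputable def omegaAut (G : Type*) [Group G] : ℕ :=
  Nat.card (MulAction.orbitRel.Quotient (MulAut G) G)

section aux

variable {G : Type*} [Group G]

private lemma aux_orbit_eq {a b : G}
    (h : (Quotient.mk'' a : MulAction.orbitRel.Quotient (MulAut G) G) = Quotient.mk'' b) :
    ∃ φ : MulAut G, φ b = a := by
  rw [Quotient.eq''] at h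
  obtain ⟨φ, hφ⟩ := MulAction.orbitRel_apply.mp h
  exact ⟨φ, hφ⟩

private lemma aux_orbit_one {a : G}
    (h : (Quotient.mk'' a : MulAction.orbitRel.Quotient (MulAut G) G) = Quotient.mk'' 1) :
    a = 1 := by
  obtain ⟨φ, hφ⟩ := aux_orbit_eq h
  simpa using hφ.symm

lemma omegaAut_eq_two_iff [Nontrivial G] :
    omegaAut G = 2 ↔ ∀ a b : G, a ≠ 1 → b ≠ 1 → ∃ φ : MulAut G, φ a = b := by
  rw [omegaAut, Nat.card_eq_two_iff]
  constructor
  · rintro ⟨x, y, hxy, hcover⟩ a b ha hb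
    have hmem : ∀ c : G, (Quotient.mk'' c : MulAction.orbitRel.Quotient (MulAut G) G) = x ∨
        (Quotient.mk'' c : MulAction.orbitRel.Quotient (MulAut G) G) = y := by
      intro c
      have := hcover ▸ Set.mem_univ (Quotient.mk'' c : MulAction.orbitRel.Quotient (MulAut G) G)
      simpa using this
    have key : (Quotient.mk'' a : MulAction.orbitRel.Quotient (MulAut G) G) = Quotient.mk'' b := by
      have h1 := hmem 1
      have hane : (Quotient.mk'' a : MulAction.orbitRel.Quotient (MulAut G) G) ≠ Quotient.mk'' 1 :=
        fun h => ha (aux_orbit_one h)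
      have hbne : (Quotient.mk'' b : MulAction.orbitRel.Quotient (MulAut G) G) ≠ Quotient.mk'' 1 :=
        fun h => hb (aux_orbit_one h)
      rcases hmem a with h2 | h2 <;> rcases hmem b with h3 | h3 <;>
        rcases h1 with h4 | h4 <;> simp_all
    obtain ⟨φ, hφ⟩ := aux_orbit_eq key
    exact ⟨φ⁻¹, by simpa using congrArg (⇑φ⁻¹) hφ.symm⟩
  · intro htrans
    obtain ⟨g₀, hg₀⟩ := exists_ne (1 : G)
    refine ⟨Quotient.mk'' 1, Quotient.mk'' g₀, ?_, ?_⟩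
    · intro h
      exact hg₀ (aux_orbit_one h.symm)
    · ext c
      simp only [Set.mem_insert_iff, Set.mem_singleton_iff, Set.mem_univ, iff_true]
      obtain ⟨c, rfl⟩ := Quotient.exists_rep c
      by_cases hc : c = 1
      · left; rw [hc]
      · right
        obtain ⟨φ, hφ⟩ := htrans g₀ c hg₀ hc
        show Quotient.mk'' c = Quotient.mk'' g₀
        exact Quotient.sound' (MulAction.orbitRel_apply.mpr ⟨φ, hφ⟩)

end aux

/-- A nontrivial finite group has exactly 2 automorphism orbits iff it is an
elementary abelian `p`-group for some prime `p`. -/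
theorem stmt_16 (G : Type*) [Group G] [Finite G] [Nontrivial G] :
    omegaAut G = 2 ↔
      ∃ p : ℕ, p.Prime ∧ (∀ a b : G, a * b = b * a) ∧ ∀ g : G, g ^ p = 1 := by
  rw [omegaAut_eq_two_iff]
  constructor
  · intro htrans
    set p := (Nat.card G).minFac with hp
    have hcard : 1 < Nat.card G := Finite.one_lt_card
    have hpp : p.Prime := Nat.minFac_prime (by omega)
    haveI : Fact p.Prime := ⟨hpp⟩
    obtain ⟨h, hh⟩ := exists_prime_orderOf_dvd_card' p (Nat.minFac_dvd _)
    have hh1 : h ≠ 1 := by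
      intro e
      rw [e, orderOf_one] at hh
      exact hpp.one_lt.ne hh
    have horder : ∀ x : G, x ≠ 1 → orderOf x = p := by
      intro x hx
      obtain ⟨φ, hφ⟩ := htrans h x hh1 hx
      rw [← hφ]
      simpa [hh] using orderOf_injective φ.toMonoidHom φ.injective h
    have hpow : ∀ g : G, g ^ p = 1 := by
      intro g
      by_cases hg : g = 1
      · simp [hg]
      · rw [← horder g hg]; exact pow_orderOf_eq_one g
    have hpg : IsPGroup p G := fun g => ⟨1, by simpa using hpow g⟩
    haveI := hpg.center_nontrivial
    obtain ⟨⟨z, hz⟩, hzne⟩ := exists_ne (1 : Subgroup.center G)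
    have hz1 : z ≠ 1 := fun e => hzne (Subtype.ext e)
    have hcent : ∀ g : G, g ∈ Subgroup.center G := by
      intro g
      by_cases hg : g = 1
      · rw [hg]; exact Subgroup.one_mem _
      · obtain ⟨φ, hφ⟩ := htrans z g hz1 hg
        rw [← hφ]
        rw [Subgroup.mem_center_iff] at hz ⊢
        intro w
        have hw := hz (φ.symm w)
        calc w * φ z = φ (φ.symm w * z) := by simp
          _ = φ (z * φ.symm w) := by rw [hw]
          _ = φ z * w := by simp
    refine ⟨p, hpp, fun a b => ?_, hpow⟩
    exact (Subgroup.mem_center_iff.mp (hcent b)) a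
  · rintro ⟨p, hpp, hcomm, hpow⟩ a b ha hb
    classical
    haveI : Fact p.Prime := ⟨hpp⟩
    letI : CommGroup G := { ‹Group G› with mul_comm := fun a b => hcomm a b }
    haveI : Module (ZMod p) (Additive G) := AddCommGroup.zmodModule (n := p) (by
      intro x
      have hx : x.toMul ^ p = 1 := hpow _
      have := congrArg Additive.ofMul hx
      simpa using this)
    have ha' : (Additive.ofMul a : Additive G) ≠ 0 := by simpa using ha
    have hb' : (Additive.ofMul b : Additive G) ≠ 0 := by simpa using hb
    haveI : NoZeroSMulDivisors (ZMod p) (Additive G) :=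
      GroupWithZero.toNoZeroSMulDivisors (R := ZMod p) (M := Additive G)
    have lia := LinearIndepOn.singleton (R := ZMod p) (v := (id : Additive G → Additive G)) (i := Additive.ofMul a) ha'
    have lib := LinearIndepOn.singleton (R := ZMod p) (v := (id : Additive G → Additive G)) (i := Additive.ofMul b) hb'
    let Ba := Module.Basis.extend lia
    let Bb := Module.Basis.extend lib
    let ia : lia.extend (Set.subset_univ _) :=
      ⟨Additive.ofMul a, lia.subset_extend _ rfl⟩
    let ib : lib.extend (Set.subset_univ _) :=
      ⟨Additive.ofMul b, lib.subset_extend _ rfl⟩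
    let e0 := Ba.indexEquiv Bb
    let e := e0.trans (Equiv.swap (e0 ia) ib)
    let σ := Ba.equiv Bb e
    have hσ : σ (Additive.ofMul a) = Additive.ofMul b := by
      have h1 : Ba ia = Additive.ofMul a := Module.Basis.extend_apply_self lia ia
      have h2 : Bb ib = Additive.ofMul b := Module.Basis.extend_apply_self lib ib
      have h3 : e ia = ib := by
        show Equiv.swap (e0 ia) ib (e0 ia) = ib
        exact Equiv.swap_apply_left _ _
      rw [← h1, Module.Basis.equiv_apply, h3, h2]
    refine ⟨MulEquiv.toAdditive.symm σ.toAddEquiv, ?_⟩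
    show (σ (Additive.ofMul a)).toMul = b
    rw [hσ]
    rfl
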